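/- Let f : ℝ → ℝ be a function and let x, L be real numbers. Then f has derivative L at x (HasDerivAt f L x) if and only if for every infinitesimal hyperreal ε there exists an infinitesimal hyperreal λ such that *f(x + ε) − *f(x) = (L + λ)·ε, where *f is the natural extension of f to the hyperreals. -/

import Mathlib

open Filter

private lemma os_coe (r : ℝ) : (r : ℝ*) = Hyperreal.ofSeq (fun _ => r) := rfl

private lemma os_add (f g : ℕ → ℝ) :
    Hyperreal.ofSeq f + Hyperreal.ofSeq g = Hyperreal.ofSeq (fun n => f n + g n) := rfl

private lemma os_sub (f g : ℕ → ℝ) :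
    Hyperreal.ofSeq f - Hyperreal.ofSeq g = Hyperreal.ofSeq (fun n => f n - g n) := rfl

private lemma os_mul (f g : ℕ → ℝ) :
    Hyperreal.ofSeq f * Hyperreal.ofSeq g = Hyperreal.ofSeq (fun n => f n * g n) := rfl

private lemma os_map (f : ℝ → ℝ) (g : ℕ → ℝ) :
    Filter.Germ.map f (Hyperreal.ofSeq g) = Hyperreal.ofSeq (fun n => f (g n)) := rfl

private lemma os_eq {f g : ℕ → ℝ} :
    Hyperreal.ofSeq f = Hyperreal.ofSeq g ↔ ∀ᶠ n in (hyperfilter ℕ : Filter ℕ), f n = g n :=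
  Filter.Germ.coe_eq

/-- `f` has derivative `L` at `x` iff for every infinitesimal hyperreal `ε` there is an
infinitesimal hyperreal `λ` with `*f(x + ε) - *f(x) = (L + λ) * ε`, where `*f` is the
natural extension of `f` to the hyperreals. -/
theorem hasDerivAt_iff_infinitesimal_slope (f : ℝ → ℝ) (x L : ℝ) :
    HasDerivAt f L x ↔
      ∀ ε : ℝ*, Hyperreal.Infinitesimal ε →
        ∃ lam : ℝ*, Hyperreal.Infinitesimal lam ∧
          Filter.Germ.map f ((x : ℝ*) + ε) - Filter.Germ.map f (x : ℝ*) =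
            ((L : ℝ*) + lam) * ε := by
  constructor
  · intro hf ε hε
    obtain ⟨e, rfl⟩ := Hyperreal.ofSeq_surjective ε
    set l : ℕ → ℝ := fun n => if e n = 0 then 0 else (f (x + e n) - f x - L * e n) / e n with hl
    refine ⟨Hyperreal.ofSeq l, ?_, ?_⟩
    · rw [Hyperreal.infinitesimal_def] at hε ⊢
      intro r hr
      have h := (hasDerivAt_iff_isLittleO.mp hf).def (show (0:ℝ) < r/2 by linarith)
      rw [Metric.eventually_nhds_iff] at h
      obtain ⟨δ, hδ, hδ'⟩ := h
      obtain ⟨h1, h2⟩ := hε δ hδ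
      rw [os_coe δ, Hyperreal.ofSeq_lt_ofSeq] at h2
      rw [show (-(δ:ℝ*)) = Hyperreal.ofSeq (fun _ => -δ) from rfl,
        Hyperreal.ofSeq_lt_ofSeq] at h1
      have key : ∀ᶠ n in (hyperfilter ℕ : Filter ℕ), |l n| ≤ r/2 := by
        filter_upwards [h1, h2] with n hn1 hn2
        rcases eq_or_ne (e n) 0 with h0 | h0
        · simp [hl, h0]; linarith
        · have hd : dist (x + e n) x < δ := by
            rw [Real.dist_eq, add_sub_cancel_left, abs_lt]; exact ⟨hn1, hn2⟩
          have hb := hδ' hd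
          simp only [Real.norm_eq_abs, smul_eq_mul, add_sub_cancel_left] at hb
          rw [hl]; simp only [if_neg h0]
          rw [abs_div, div_le_iff₀ (abs_pos.mpr h0)]
          calc |f (x + e n) - f x - L * e n| = |f (x + e n) - f x - e n * L| := by ring_nf
            _ ≤ r/2 * |e n| := hb
      constructor
      · rw [show (-(r:ℝ*)) = Hyperreal.ofSeq (fun _ => -r) from rfl, Hyperreal.ofSeq_lt_ofSeq]
        filter_upwards [key] with n hn
        have := (abs_le.mp hn).1; linarith
      · rw [os_coe r, Hyperreal.ofSeq_lt_ofSeq]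
        filter_upwards [key] with n hn
        have := (abs_le.mp hn).2; linarith
    · rw [os_coe x, os_coe L, os_add, os_map, os_map]; erw [os_sub]; rw [os_add, os_mul]; erw [os_eq]
      apply Filter.Eventually.of_forall
      intro n
      rcases eq_or_ne (e n) 0 with h0 | h0
      · simp [hl, h0]
      · simp only [hl, if_neg h0]; field_simp; ring
  · intro H
    rw [hasDerivAt_iff_isLittleO, Asymptotics.isLittleO_iff]
    by_contra hc
    push_neg at hc
    obtain ⟨c, hc0, hfreq⟩ := hc
    have hsel : ∀ n : ℕ, ∃ y : ℝ, |y - x| < 1/(n+1) ∧ c * |y - x| < |f y - f x - (y - x) * L| := by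
      intro n
      have hb : Metric.ball x (1/(n+1)) ∈ nhds x := Metric.ball_mem_nhds x (by positivity)
      obtain ⟨y, hy1, hy2⟩ := (hfreq.and_eventually (Filter.eventually_mem_set.mpr hb)).exists
      refine ⟨y, ?_, ?_⟩
      · rw [Metric.mem_ball, Real.dist_eq] at hy2; exact hy2
      · simpa [Real.norm_eq_abs, smul_eq_mul] using hy1
    choose y hy1 hy2 using hsel
    set e : ℕ → ℝ := fun n => y n - x with he
    have hene : ∀ n, e n ≠ 0 := by
      intro n h0
      have hyx : y n = x := by
        have : y n - x = 0 := h0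
        linarith
      have h2 := hy2 n
      rw [hyx] at h2
      simp at h2
    have hεinf : Hyperreal.Infinitesimal (Hyperreal.ofSeq e) := by
      rw [Hyperreal.infinitesimal_def]
      intro r hr
      have hev : ∀ᶠ n in (hyperfilter ℕ : Filter ℕ), |e n| < r := by
        apply Filter.hyperfilter_le_cofinite
        rw [Nat.cofinite_eq_atTop]
        have ht : Filter.Tendsto (fun n : ℕ => 1/((n:ℝ)+1)) atTop (nhds 0) :=
          tendsto_one_div_add_atTop_nhds_zero_nat
        filter_upwards [ht.eventually (gt_mem_nhds hr)] with n hn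
        exact lt_trans (hy1 n) hn
      constructor
      · rw [show (-(r:ℝ*)) = Hyperreal.ofSeq (fun _ => -r) from rfl, Hyperreal.ofSeq_lt_ofSeq]
        filter_upwards [hev] with n hn; linarith [(abs_lt.mp hn).1]
      · rw [os_coe r, Hyperreal.ofSeq_lt_ofSeq]
        filter_upwards [hev] with n hn; exact (abs_lt.mp hn).2
    obtain ⟨lam, hlaminf, heq⟩ := H (Hyperreal.ofSeq e) hεinf
    obtain ⟨l, rfl⟩ := Hyperreal.ofSeq_surjective lam
    rw [os_coe x, os_coe L, os_add, os_map, os_map] at heq; erw [os_sub] at heq; rw [os_add, os_mul] at heq; erw [os_eq] at heq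
    have hbig : ∀ᶠ n in (hyperfilter ℕ : Filter ℕ), c < |l n| := by
      filter_upwards [heq] with n hn
      have h2 := hy2 n
      have hxe : x + e n = y n := by rw [he]; ring
      have h3 : f (y n) - f x - (y n - x) * L = l n * e n := by
        rw [← hxe, hn, he]; ring
      rw [h3, abs_mul] at h2
      have hepos : 0 < |e n| := abs_pos.mpr (hene n)
      have h4 : c * |e n| < |l n| * |e n| := by rw [he] at hepos ⊢; exact h2
      exact lt_of_mul_lt_mul_right h4 (le_of_lt hepos)
    obtain ⟨hs1, hs2⟩ := Hyperreal.infinitesimal_def.mp hlaminf c hc0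
    rw [show (-(c:ℝ*)) = Hyperreal.ofSeq (fun _ => -c) from rfl, Hyperreal.ofSeq_lt_ofSeq] at hs1
    rw [os_coe c, Hyperreal.ofSeq_lt_ofSeq] at hs2
    obtain ⟨n, hn1, hn2, hn3⟩ := (hbig.and (hs1.and hs2)).exists
    have := abs_lt.mpr ⟨by linarith, hn3⟩
    linarith
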